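/- arXiv:1202.3974 — 2 statements merged into one kernel-verified Lean document; each statement's English description precedes it below -/
import Mathlib

section
/- For Zipf(α) popularity with α > 0, let t_C(N) be the unique root of Σ_{n=1}^{N}(1 − e^{-t/n^α}) = ⌊δN⌋ for fixed 0 < δ < 1. Then t_{⌊δN⌋}(N)/N^α → ψ_α^{-1}(δ) as N → ∞. -/
open Filter

/-- `ψ_α(β) = 1 − ∫_0^1 e^{-β/x^α} dx`. -/
noncomputable def psi (α β : ℝ) : ℝ := 1 - ∫ x in Set.Ioc (0 : ℝ) 1, Real.exp (-β / x ^ α)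

/-- Modified integrand, set to `1` at nonpositive arguments so that it is antitone. -/
noncomputable def Haux (α β : ℝ) (u : ℝ) : ℝ :=
  if u ≤ 0 then 1 else 1 - Real.exp (-β / u ^ α)

lemma Haux_nonneg (α β : ℝ) (hβ : 0 ≤ β) (u : ℝ) : 0 ≤ Haux α β u := by
  unfold Haux
  split_ifs with h
  · norm_num
  · push_neg at h
    have h1 : Real.exp (-β / u ^ α) ≤ 1 := by
      rw [Real.exp_le_one_iff]
      apply div_nonpos_of_nonpos_of_nonneg (by linarith)
      exact (Real.rpow_pos_of_pos h α).le
    linarith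

lemma Haux_le_one (α β : ℝ) (u : ℝ) : Haux α β u ≤ 1 := by
  unfold Haux
  split_ifs with h
  · exact le_refl 1
  · have := Real.exp_pos (-β / u ^ α)
    linarith

lemma Haux_anti (α β : ℝ) (hα : 0 < α) (hβ : 0 ≤ β) : Antitone (Haux α β) := by
  intro x y hxy
  unfold Haux
  split_ifs with hy hx hx
  · exact le_refl 1
  · -- y ≤ 0, ¬ x ≤ 0 : impossible since x ≤ y
    exact absurd (hxy.trans hy) hx
  · -- ¬ y ≤ 0, x ≤ 0 : value at y is ≤ 1
    have h1 : Real.exp (-β / y ^ α) ≤ 1 := by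
      rw [Real.exp_le_one_iff]
      push_neg at hy
      apply div_nonpos_of_nonpos_of_nonneg (by linarith)
      exact (Real.rpow_pos_of_pos hy α).le
    linarith [Real.exp_pos (-β / y ^ α)]
  · push_neg at hy hx
    have hxa : (0:ℝ) < x ^ α := Real.rpow_pos_of_pos hx α
    have hle : x ^ α ≤ y ^ α := Real.rpow_le_rpow hx.le hxy hα.le
    have : β / y ^ α ≤ β / x ^ α := div_le_div_of_nonneg_left hβ hxa hle
    have h2 := Real.exp_le_exp.mpr (neg_le_neg this)
    simp only [neg_div]
    linarith

lemma Haux_measurable (α β : ℝ) (hα : 0 < α) (hβ : 0 ≤ β) : Measurable (Haux α β) :=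
  (Haux_anti α β hα hβ).measurable

lemma exp_integrableOn (α β : ℝ) (hα : 0 < α) (hβ : 0 ≤ β) :
    MeasureTheory.IntegrableOn (fun x : ℝ => Real.exp (-β / x ^ α)) (Set.Ioc (0:ℝ) 1) := by
  have h : MeasureTheory.IntegrableOn (fun x : ℝ => 1 - Haux α β x) (Set.Ioc (0:ℝ) 1) := by
    apply MeasureTheory.Measure.integrableOn_of_bounded (M := 1)
    · simp [Real.volume_Ioc]
    · exact (measurable_const.sub (Haux_measurable α β hα hβ)).aestronglyMeasurable
    · refine MeasureTheory.ae_of_all _ fun a => ?_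
      rw [Real.norm_eq_abs, abs_le]
      constructor
      · linarith [Haux_le_one α β a]
      · linarith [Haux_nonneg α β hβ a]
  apply h.congr_fun _ measurableSet_Ioc
  intro x hx
  simp [Haux, not_le.mpr hx.1]

lemma Haux_integral (α β : ℝ) (hα : 0 < α) (hβ : 0 ≤ β) :
    ∫ x in (0:ℝ)..1, Haux α β x = psi α β := by
  rw [intervalIntegral.integral_of_le (by norm_num : (0:ℝ) ≤ 1)]
  have h1 : ∫ x in Set.Ioc (0:ℝ) 1, Haux α β x
      = ∫ x in Set.Ioc (0:ℝ) 1, (1 - Real.exp (-β / x ^ α)) := by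
    apply MeasureTheory.setIntegral_congr_fun measurableSet_Ioc
    intro x hx
    simp [Haux, not_le.mpr hx.1]
  rw [h1]
  rw [MeasureTheory.integral_sub (MeasureTheory.integrableOn_const (s := Set.Ioc (0:ℝ) 1) (μ := MeasureTheory.volume) (C := (1:ℝ)) (by simp [Real.volume_Ioc]) : MeasureTheory.Integrable (fun _ => (1:ℝ)) (MeasureTheory.volume.restrict (Set.Ioc (0:ℝ) 1)))
    (exp_integrableOn α β hα hβ)]
  simp [psi, Real.volume_Ioc]

/-- Strict monotonicity of ψ in β on positives. -/
lemma psi_strictMono (α : ℝ) (hα : 0 < α) {b1 b2 : ℝ} (hb1 : 0 < b1) (h12 : b1 < b2) :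
    psi α b1 < psi α b2 := by
  have key : 0 < ∫ x in (0:ℝ)..1,
      (Real.exp (-b1 / x ^ α) - Real.exp (-b2 / x ^ α)) := by
    apply intervalIntegral.intervalIntegral_pos_of_pos_on
    · rw [intervalIntegrable_iff_integrableOn_Ioc_of_le (by norm_num)]
      exact (exp_integrableOn α b1 hα hb1.le).sub (exp_integrableOn α b2 hα (by linarith))
    · intro x hx
      have hx0 : (0:ℝ) < x ^ α := Real.rpow_pos_of_pos hx.1 α
      have : -b2 / x ^ α < -b1 / x ^ α := by
        apply div_lt_div_of_pos_right (by linarith) hx0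
      exact sub_pos.mpr (Real.exp_lt_exp.mpr this)
    · norm_num
  rw [intervalIntegral.integral_of_le (by norm_num : (0:ℝ) ≤ 1),
    MeasureTheory.integral_sub (exp_integrableOn α b1 hα hb1.le)
      (exp_integrableOn α b2 hα (by linarith))] at key
  unfold psi
  linarith

/-- The Riemann-sum estimate. -/
lemma riemann (α β : ℝ) (hα : 0 < α) (hβ : 0 < β) (N : ℕ) (hN : 1 ≤ N) :
    N * psi α β - 1 ≤ (∑ n ∈ Finset.Icc 1 N, (1 - Real.exp (-(β * (N:ℝ) ^ α) / (n:ℝ) ^ α)))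
    ∧ (∑ n ∈ Finset.Icc 1 N, (1 - Real.exp (-(β * (N:ℝ) ^ α) / (n:ℝ) ^ α))) ≤ N * psi α β := by
  have hN0 : (0:ℝ) < N := by exact_mod_cast hN
  set G : ℝ → ℝ := fun u => Haux α β (u / N) with hG
  have hGanti : Antitone G := by
    intro x y hxy
    exact Haux_anti α β hα hβ.le ((div_le_div_iff_of_pos_right hN0).mpr hxy)
  -- each summand equals G n
  have hterm : ∀ n ∈ Finset.Icc 1 N,
      (1 - Real.exp (-(β * (N:ℝ) ^ α) / (n:ℝ) ^ α)) = G (n:ℝ) := by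
    intro n hn
    have hn1 : 1 ≤ n := (Finset.mem_Icc.mp hn).1
    have hn0 : (0:ℝ) < n := by exact_mod_cast hn1
    have hpos : (0:ℝ) < (n:ℝ) / N := div_pos hn0 hN0
    have hrw : (((n:ℝ) / N) ^ α) = (n:ℝ) ^ α / (N:ℝ) ^ α :=
      Real.div_rpow hn0.le hN0.le α
    simp only [hG, Haux, not_le.mpr hpos, if_false]
    congr 1
    rw [hrw, div_div_eq_mul_div, neg_div, neg_mul, neg_div]
  have hsum : (∑ n ∈ Finset.Icc 1 N, (1 - Real.exp (-(β * (N:ℝ) ^ α) / (n:ℝ) ^ α)))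
      = ∑ i ∈ Finset.range N, G ((0:ℝ) + ((i + 1 : ℕ) : ℝ)) := by
    rw [Finset.sum_congr rfl hterm]
    rw [← Finset.Ico_add_one_right_eq_Icc, Finset.sum_Ico_eq_sum_range]
    apply Finset.sum_congr (by norm_num)
    intro i _
    congr 1
    push_cast
    ring
  have hint : ∫ x in (0:ℝ)..((0:ℝ) + (N:ℝ)), G x = N * psi α β := by
    rw [zero_add, hG]
    have := intervalIntegral.integral_comp_div (a := (0:ℝ)) (b := (N:ℝ))
      (c := (N:ℝ)) (Haux α β) (ne_of_gt hN0)
    rw [this]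
    rw [div_self (ne_of_gt hN0), zero_div, Haux_integral α β hα hβ.le]
    simp [smul_eq_mul]
  have hGanti' : AntitoneOn G (Set.Icc (0:ℝ) ((0:ℝ) + (N:ℝ))) := hGanti.antitoneOn _
  constructor
  · -- lower bound: N ψ - 1 ≤ sum.  Use ∫ ≤ ∑ G(i), and ∑ G(i) ≤ 1 + ∑ G(i+1)
    have h2 : ∫ x in (0:ℝ)..((0:ℝ) + (N:ℝ)), G x ≤ ∑ i ∈ Finset.range N, G ((0:ℝ) + (i:ℕ)) := by
      exact hGanti'.integral_le_sum
    have h3 : ∑ i ∈ Finset.range N, G ((0:ℝ) + (i:ℕ))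
        ≤ 1 + ∑ i ∈ Finset.range N, G ((0:ℝ) + ((i + 1 : ℕ) : ℝ)) := by
      obtain ⟨m, rfl⟩ := Nat.exists_eq_succ_of_ne_zero (by omega : N ≠ 0)
      simp only [Nat.succ_eq_add_one] at *
      rw [Finset.sum_range_succ' (fun i => G ((0:ℝ) + (i:ℕ)))]
      have hle1 : G ((0:ℝ) + 0) ≤ 1 := Haux_le_one α β _
      have hnn : 0 ≤ G ((0:ℝ) + ((m + 1 : ℕ) : ℝ)) := Haux_nonneg α β hβ.le _
      have : ∑ i ∈ Finset.range m, G ((0:ℝ) + ((i + 1 : ℕ) : ℝ))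
          ≤ ∑ i ∈ Finset.range (m + 1), G ((0:ℝ) + ((i + 1 : ℕ) : ℝ)) := by
        rw [Finset.sum_range_succ]
        linarith
      push_cast at this ⊢
      linarith
    rw [hsum]
    rw [hint] at h2
    linarith
  · have h1 : ∑ i ∈ Finset.range N, G ((0:ℝ) + ((i + 1 : ℕ) : ℝ))
        ≤ ∫ x in (0:ℝ)..((0:ℝ) + (N:ℝ)), G x := hGanti'.sum_le_integral
    rw [hsum, ← hint]
    exact h1

/-- Monotonicity of the finite sum in `t`. -/
lemma sum_mono (α : ℝ) (N : ℕ) {t1 t2 : ℝ} (h12 : t1 ≤ t2) :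
    (∑ n ∈ Finset.Icc 1 N, (1 - Real.exp (-t1 / (n:ℝ) ^ α)))
    ≤ ∑ n ∈ Finset.Icc 1 N, (1 - Real.exp (-t2 / (n:ℝ) ^ α)) := by
  apply Finset.sum_le_sum
  intro n hn
  have hn1 : 1 ≤ n := (Finset.mem_Icc.mp hn).1
  have hn0 : (0:ℝ) < n := by exact_mod_cast hn1
  have hna : (0:ℝ) < (n:ℝ) ^ α := Real.rpow_pos_of_pos hn0 α
  have : -t2 / (n:ℝ) ^ α ≤ -t1 / (n:ℝ) ^ α :=
    (div_le_div_iff_of_pos_right hna).mpr (neg_le_neg h12)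
  have := Real.exp_le_exp.mpr this
  linarith

/-- Proposition 3, first part: for Zipf(α) popularity, if `t N` is a
nonnegative root of `∑_{n=1}^N (1 − e^{-t/n^α}) = ⌊δN⌋` for each `N`, with `0 < δ < 1`,
then `t N / N^α → ψ_α⁻¹(δ)` as `N → ∞`. -/
theorem stmt12 (α : ℝ) (hα : 0 < α) (δ : ℝ) (hδ0 : 0 < δ) (hδ1 : δ < 1)
    (βstar : ℝ) (hβstar : 0 < βstar) (hinv : psi α βstar = δ)
    (t : ℕ → ℝ)
    (ht : ∀ N : ℕ, 1 ≤ N → 0 ≤ t N ∧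
      ∑ n ∈ Finset.Icc 1 N, (1 - Real.exp (-(t N) / (n : ℝ) ^ α)) = (⌊δ * N⌋ : ℝ)) :
    Tendsto (fun N : ℕ => t N / (N : ℝ) ^ α) atTop (nhds βstar) := by
  rw [Metric.tendsto_atTop]
  intro ε hε
  set ε' : ℝ := min ε (βstar / 2) with hε'def
  have hε'pos : 0 < ε' := lt_min hε (by linarith)
  have hε'le : ε' ≤ ε := min_le_left _ _
  have hε'lt : ε' < βstar := (min_le_right _ _).trans_lt (by linarith)
  set b1 : ℝ := βstar - ε' with hb1def
  set b2 : ℝ := βstar + ε' with hb2def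
  have hb1pos : 0 < b1 := by simp [hb1def]; linarith
  have hb2pos : 0 < b2 := by simp [hb2def]; linarith
  have hψ1 : psi α b1 < δ := by
    rw [← hinv]; exact psi_strictMono α hα hb1pos (by simp [hb1def]; linarith)
  have hψ2 : δ < psi α b2 := by
    rw [← hinv]; exact psi_strictMono α hα hβstar (by simp [hb2def]; linarith)
  obtain ⟨M, hM⟩ := exists_nat_gt (max (1 / (δ - psi α b1)) (1 / (psi α b2 - δ)) + 1)
  refine ⟨M + 1, fun N hN => ?_⟩
  have hN1 : 1 ≤ N := le_trans (Nat.le_add_left 1 M) hN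
  have hNR : (0:ℝ) < N := by exact_mod_cast hN1
  have hNa : (0:ℝ) < (N:ℝ) ^ α := Real.rpow_pos_of_pos hNR α
  have hNM : (M:ℝ) + 1 ≤ (N:ℝ) := by exact_mod_cast hN
  have hNbig1 : 1 / (δ - psi α b1) < (N:ℝ) := by
    have := le_max_left (1 / (δ - psi α b1)) (1 / (psi α b2 - δ))
    linarith
  have hNbig2 : 1 / (psi α b2 - δ) < (N:ℝ) := by
    have := le_max_right (1 / (δ - psi α b1)) (1 / (psi α b2 - δ))
    linarith
  obtain ⟨htN0, heq⟩ := ht N hN1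
  -- upper bound: t N < b2 * N^α
  have hub : t N < b2 * (N:ℝ) ^ α := by
    by_contra hcon
    push_neg at hcon
    have hmono := sum_mono α N hcon
    have hriem := (riemann α b2 hα hb2pos N hN1).1
    rw [heq] at hmono
    have hfloor : (⌊δ * N⌋ : ℝ) ≤ δ * N := Int.floor_le _
    -- N * psi α b2 - 1 ≤ ⌊δN⌋ ≤ δ N, so N (psi b2 - δ) ≤ 1, contradicting hNbig2
    have h1 : (N:ℝ) * psi α b2 - 1 ≤ δ * N := by linarith
    have h2 : (N:ℝ) * (psi α b2 - δ) ≤ 1 := by ring_nf; ring_nf at h1; linarith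
    have h3 : 1 / (psi α b2 - δ) < (N:ℝ) := hNbig2
    have hpos : 0 < psi α b2 - δ := by linarith
    rw [div_lt_iff₀ hpos] at h3
    nlinarith
  -- lower bound: b1 * N^α < t N
  have hlb : b1 * (N:ℝ) ^ α < t N := by
    by_contra hcon
    push_neg at hcon
    have hmono := sum_mono α N hcon
    have hriem := (riemann α b1 hα hb1pos N hN1).2
    rw [heq] at hmono
    have hfloor : δ * N - 1 < (⌊δ * N⌋ : ℝ) := Int.sub_one_lt_floor _
    have h1 : δ * N - 1 < (N:ℝ) * psi α b1 := by linarith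
    have hpos : 0 < δ - psi α b1 := by linarith
    rw [div_lt_iff₀ hpos] at hNbig1
    nlinarith
  -- conclude
  have h1 : b1 < t N / (N:ℝ) ^ α := by
    rw [lt_div_iff₀ hNa]; linarith
  have h2 : t N / (N:ℝ) ^ α < b2 := by
    rw [div_lt_iff₀ hNa]; linarith
  rw [Real.dist_eq, abs_lt]
  constructor <;> [skip; skip] <;> simp only [hb1def, hb2def] at h1 h2 <;> linarith
end

section
/- For geometric popularity q(n) = ρ^n with 0 < ρ < 1, the mean m(t) = Σ_{n=1}^{∞} (1 − e^{-ρ^n t}) satisfies m(t) = −log t/log ρ + O(1) as t → ∞. -/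
open Real Finset

/-- for geometric popularity `q(n) = ρⁿ`, `0 < ρ < 1`,
`m(t) = ∑_{n=1}^∞ (1 − e^{-ρⁿ t}) = −log t / log ρ + O(1)` as `t → ∞`, i.e. the
difference is bounded for `t ≥ 1`. -/
theorem stmt13 (ρ : ℝ) (hρ0 : 0 < ρ) (hρ1 : ρ < 1)
    (m : ℝ → ℝ) (hm : ∀ t, m t = ∑' n : ℕ, (1 - Real.exp (-(ρ ^ (n + 1)) * t))) :
    ∃ M : ℝ, ∀ t : ℝ, 1 ≤ t → |m t - (-(Real.log t / Real.log ρ))| ≤ M := by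
  have h1ρ : (0:ℝ) < 1 - ρ := by linarith
  have hlogρ : Real.log ρ < 0 := Real.log_neg hρ0 hρ1
  set L : ℝ := -Real.log ρ with hL
  have hL0 : 0 < L := by simp only [hL]; linarith
  refine ⟨1 + (1 - ρ)⁻¹, fun t ht => ?_⟩
  have ht0 : (0:ℝ) < t := lt_of_lt_of_le one_pos ht
  have hlt0 : 0 ≤ Real.log t := Real.log_nonneg ht
  set N : ℕ := ⌊Real.log t / L⌋₊ with hN
  have hN1 : (N:ℝ) ≤ Real.log t / L := Nat.floor_le (by positivity)
  have hN2 : Real.log t / L < N + 1 := Nat.lt_floor_add_one _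
  have hNL : (N:ℝ) * L ≤ Real.log t := by
    rw [← le_div_iff₀ hL0]; exact hN1
  have hNL2 : Real.log t ≤ ((N:ℝ) + 1) * L := by
    rw [← div_le_iff₀ hL0]; exact hN2.le
  -- basic identity
  have hpowe : ∀ k : ℕ, ρ ^ k = Real.exp (-(k * L)) := by
    intro k
    have h : -((k:ℝ) * L) = k * Real.log ρ := by rw [hL]; ring
    rw [h, Real.exp_nat_mul, Real.exp_log hρ0]
  have hpow : ∀ k : ℕ, ρ ^ k * t = Real.exp (Real.log t - k * L) := by
    intro k
    conv_lhs => rw [hpowe k, ← Real.exp_log ht0]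
    rw [← Real.exp_add]
    congr 1
    ring
  have hρNt : 1 ≤ ρ ^ N * t := by
    rw [hpow]; exact Real.one_le_exp (by linarith)
  have hρN1t : ρ ^ (N + 1) * t ≤ 1 := by
    rw [hpow]
    apply Real.exp_le_one_iff.mpr
    push_cast
    linarith
  set f : ℕ → ℝ := fun n => 1 - Real.exp (-(ρ ^ (n + 1)) * t) with hf
  have hf0 : ∀ n, 0 ≤ f n := by
    intro n
    have : Real.exp (-(ρ ^ (n + 1)) * t) ≤ 1 := by
      apply Real.exp_le_one_iff.mpr
      have := pow_pos hρ0 (n + 1)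
      nlinarith
    simp only [hf]; linarith
  have hfle : ∀ n, f n ≤ ρ ^ (n + 1) * t := by
    intro n
    have := Real.add_one_le_exp (-(ρ ^ (n + 1)) * t)
    simp only [hf]; linarith
  have hg : Summable (fun n : ℕ => ρ ^ (n + 1) * t) := by
    apply Summable.congr ((summable_geometric_of_lt_one hρ0.le hρ1).mul_right (ρ * t))
    intro n; rw [pow_succ]; ring
  have hfs : Summable f := Summable.of_nonneg_of_le hf0 hfle hg
  have hsplit := (Summable.sum_add_tsum_nat_add N hfs).symm
  -- tail bounds
  have htail0 : 0 ≤ ∑' n : ℕ, f (n + N) := tsum_nonneg fun n => hf0 _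
  have htail : ∑' n : ℕ, f (n + N) ≤ (1 - ρ)⁻¹ := by
    have h1 : ∑' n : ℕ, f (n + N) ≤ ∑' n : ℕ, ρ ^ n * (ρ ^ (N + 1) * t) := by
      apply Summable.tsum_le_tsum
      · intro n
        have := hfle (n + N)
        calc f (n + N) ≤ ρ ^ (n + N + 1) * t := this
          _ = ρ ^ n * (ρ ^ (N + 1) * t) := by
              rw [show n + N + 1 = n + (N + 1) from by omega, pow_add]; ring
      · exact (summable_nat_add_iff N).mpr hfs
      · exact (summable_geometric_of_lt_one hρ0.le hρ1).mul_right _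
    rw [tsum_mul_right, tsum_geometric_of_lt_one hρ0.le hρ1] at h1
    have hpos : (0:ℝ) < (1 - ρ)⁻¹ := by positivity
    calc ∑' n : ℕ, f (n + N) ≤ (1 - ρ)⁻¹ * (ρ ^ (N + 1) * t) := h1
      _ ≤ (1 - ρ)⁻¹ * 1 := by
          apply mul_le_mul_of_nonneg_left hρN1t hpos.le
      _ = (1 - ρ)⁻¹ := mul_one _
  -- head bounds
  have hgeomsum : ∑ k ∈ Finset.range N, ρ ^ k ≤ (1 - ρ)⁻¹ := by
    have h := Summable.sum_le_tsum (Finset.range N) (fun i _ => pow_nonneg hρ0.le i)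
      (summable_geometric_of_lt_one hρ0.le hρ1)
    rwa [tsum_geometric_of_lt_one hρ0.le hρ1] at h
  have hheadub : ∑ i ∈ Finset.range N, f i ≤ N := by
    calc ∑ i ∈ Finset.range N, f i ≤ ∑ i ∈ Finset.range N, (1:ℝ) := by
          apply Finset.sum_le_sum
          intro i _
          have : 0 < Real.exp (-(ρ ^ (i + 1)) * t) := Real.exp_pos _
          simp only [hf]; linarith
      _ = N := by simp
  have hterm : ∀ i < N, Real.exp (-(ρ ^ (i + 1)) * t) ≤ ρ ^ (N - 1 - i) := by
    intro i hi
    have hk : (N - 1 - i : ℕ) + (i + 1) = N := by omega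
    have hk' : ((N - 1 - i : ℕ) : ℝ) = (N : ℝ) - (i + 1) := by
      have h := congrArg (Nat.cast : ℕ → ℝ) hk
      push_cast at h
      linarith
    have h1 : Real.exp (((N - 1 - i : ℕ) : ℝ) * L) ≤ ρ ^ (i + 1) * t := by
      rw [hpow]
      apply Real.exp_le_exp.mpr
      rw [hk']
      push_cast
      nlinarith
    have h2 : (0:ℝ) < Real.exp (((N - 1 - i : ℕ) : ℝ) * L) := Real.exp_pos _
    have h3 : Real.exp (-(ρ ^ (i + 1)) * t) ≤ Real.exp (-(Real.exp (((N - 1 - i : ℕ) : ℝ) * L))) := by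
      apply Real.exp_le_exp.mpr
      nlinarith
    have h4 : Real.exp (-(Real.exp (((N - 1 - i : ℕ) : ℝ) * L))) ≤ ρ ^ (N - 1 - i) := by
      rw [Real.exp_neg, hpowe, Real.exp_neg]
      apply inv_anti₀ (Real.exp_pos _)
      exact (Real.add_one_le_exp _).trans' (by linarith [Real.exp_pos (((N - 1 - i : ℕ) : ℝ) * L)])
    exact h3.trans h4
  have hheadlb : (N : ℝ) - (1 - ρ)⁻¹ ≤ ∑ i ∈ Finset.range N, f i := by
    have h1 : ∑ i ∈ Finset.range N, Real.exp (-(ρ ^ (i + 1)) * t)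
        ≤ ∑ i ∈ Finset.range N, ρ ^ (N - 1 - i) := by
      apply Finset.sum_le_sum
      intro i hi
      exact hterm i (Finset.mem_range.mp hi)
    have h2 : ∑ i ∈ Finset.range N, ρ ^ (N - 1 - i) = ∑ k ∈ Finset.range N, ρ ^ k :=
      Finset.sum_range_reflect (fun k => ρ ^ k) N
    have h3 : ∑ i ∈ Finset.range N, f i
        = (N : ℝ) - ∑ i ∈ Finset.range N, Real.exp (-(ρ ^ (i + 1)) * t) := by
      simp only [hf, Finset.sum_sub_distrib]
      simp
    rw [h3]
    have := h1.trans (h2.le.trans hgeomsum)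
    linarith
  -- combine
  have hm' : m t = ∑ i ∈ Finset.range N, f i + ∑' n : ℕ, f (n + N) := by
    rw [hm t]; exact hsplit
  have hfinal : -(Real.log t / Real.log ρ) = Real.log t / L := by
    rw [hL, div_neg]
  rw [hfinal]
  rw [abs_le]
  constructor
  · have : Real.log t / L < N + 1 := hN2
    have h := hheadlb
    nlinarith [htail0]
  · have h := hheadub
    have := hN1
    nlinarith [htail]
end
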